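/- (Good Triplets) Let ξ > 0, d > 0, δ > 0 and n ∈ ℕ with (dξ³ − δ)n/2 ≥ 1. Let H = (U ∪̇ V ∪̇ W, E) be a 3-graph on three pairwise disjoint vertex classes with |U| = |V| = |W| = n, and suppose that the triple (U, V, W) is weakly (δ, d)-quasirandom in H. Then at least (1 − ξ)·3n vertices of H can be covered by pairwise vertex-disjoint tight paths in H, each of length at least (dξ³ − δ)n/2 − 2. -/

import Mathlib

set_option maxHeartbeats 1000000


/-- `e(V₁, V₂, V₃)`: the number of triples `(v₁, v₂, v₃) ∈ V₁ × V₂ × V₃` with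
`{v₁, v₂, v₃} ∈ E`. -/
def tripleCount (E : Finset (Finset ℕ)) (V₁ V₂ V₃ : Finset ℕ) : ℕ :=
  ((V₁ ×ˢ V₂ ×ˢ V₃).filter fun t => ({t.1, t.2.1, t.2.2} : Finset ℕ) ∈ E).card

/-- `(V₁, V₂, V₃)` is weakly `(δ, d)`-quasirandom with respect to the edge set `E`. -/
def WeaklyQuasirandomWith (E : Finset (Finset ℕ)) (δ d : ℝ) (V₁ V₂ V₃ : Finset ℕ) : Prop :=
  ∀ U₁ ⊆ V₁, ∀ U₂ ⊆ V₂, ∀ U₃ ⊆ V₃,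
    |(tripleCount E U₁ U₂ U₃ : ℝ) - d * U₁.card * U₂.card * U₃.card| ≤
      δ * V₁.card * V₂.card * V₃.card

/-- `f` lists the `ℓ + 2` vertices of a tight path of length `ℓ` with vertices in
`Vs` and edges in `E`. -/
def IsTightPathIn (Vs : Finset ℕ) (E : Finset (Finset ℕ)) (ℓ : ℕ)
    (f : Fin (ℓ + 2) → ℕ) : Prop :=
  Function.Injective f ∧ (∀ i, f i ∈ Vs) ∧
  ∀ i : ℕ, ∀ h : i < ℓ,
    ({f ⟨i, by omega⟩, f ⟨i + 1, by omega⟩, f ⟨i + 2, by omega⟩} : Finset ℕ) ∈ E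


/-- class pattern for tight paths -/
def cls3 (A B C : Finset ℕ) (i : ℕ) : Finset ℕ :=
  if i % 3 = 0 then A else if i % 3 = 1 then B else C

/-- a valid pattern tight path with k vertices -/
def GoodPath (A B C : Finset ℕ) (E' : Finset (Finset ℕ)) (k : ℕ) (f : ℕ → ℕ) : Prop :=
  (∀ i < k, f i ∈ cls3 A B C i) ∧ (∀ i < k, ∀ j < k, f i = f j → i = j) ∧
  (∀ i, i + 2 < k → ({f i, f (i+1), f (i+2)} : Finset ℕ) ∈ E')

lemma cls3_disjoint {A B C : Finset ℕ} (hAB : Disjoint A B) (hAC : Disjoint A C)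
    (hBC : Disjoint B C) {i j : ℕ} (h : i % 3 ≠ j % 3) :
    Disjoint (cls3 A B C i) (cls3 A B C j) := by
  have hi : i % 3 = 0 ∨ i % 3 = 1 ∨ i % 3 = 2 := by omega
  have hj : j % 3 = 0 ∨ j % 3 = 1 ∨ j % 3 = 2 := by omega
  unfold cls3
  rcases hi with hi | hi | hi <;> rcases hj with hj | hj | hj <;>
    simp_all [hAB, hAC, hBC, hAB.symm, hAC.symm, hBC.symm]

lemma cls3_eq0 {A B C : Finset ℕ} {i : ℕ} (h : i % 3 = 0) : cls3 A B C i = A := by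
  simp [cls3, h]
lemma cls3_eq1 {A B C : Finset ℕ} {i : ℕ} (h : i % 3 = 1) : cls3 A B C i = B := by
  simp [cls3, h]
lemma cls3_eq2 {A B C : Finset ℕ} {i : ℕ} (h : i % 3 = 2) : cls3 A B C i = C := by
  simp [cls3, h]

lemma third_class {A B C : Finset ℕ} (hAB : Disjoint A B) (hAC : Disjoint A C)
    (hBC : Disjoint B C) {a b c x y w : ℕ} (ha : a ∈ A) (hb : b ∈ B) (hc : c ∈ C)
    (hx : x ∈ B) (hy : y ∈ C)
    (hxg : x = a ∨ x = b ∨ x = c) (hyg : y = a ∨ y = b ∨ y = c)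
    (hwg : w = a ∨ w = b ∨ w = c) (hwx : w ≠ x) (hwy : w ≠ y) : w ∈ A := by
  have hxb : x = b := by
    rcases hxg with rfl | rfl | rfl
    · exact absurd hx (Finset.disjoint_left.mp hAB ha)
    · rfl
    · exact absurd hc (Finset.disjoint_left.mp hBC hx)
  have hyc : y = c := by
    rcases hyg with rfl | rfl | rfl
    · exact absurd hy (Finset.disjoint_left.mp hAC ha)
    · exact absurd hy (Finset.disjoint_left.mp hBC hb)
    · rfl
  rcases hwg with h | h | h
  · exact h ▸ ha
  · exact absurd (h.trans hxb.symm) hwx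
  · exact absurd (h.trans hyc.symm) hwy

section Ext

variable {A B C : Finset ℕ} {E' : Finset (Finset ℕ)} {t : ℕ}

lemma extend_path (hAB : Disjoint A B) (hAC : Disjoint A C) (hBC : Disjoint B C)
    (hcross : ∀ e ∈ E', ∃ a ∈ A, ∃ b ∈ B, ∃ c ∈ C, e = {a, b, c})
    (hco : ∀ e ∈ E', ∀ p ∈ Finset.powersetCard 2 e,
      t ≤ (E'.filter fun g => p ⊆ g).card)
    {k : ℕ} {f : ℕ → ℕ} (hk : 3 ≤ k) (hf : GoodPath A B C E' k f)
    (hlt : k / 3 < t) :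
    ∃ f', GoodPath A B C E' (k + 1) f' ∧ ∀ i < k, f' i = f i := by
  obtain ⟨hmem, hinj, hedge⟩ := hf
  set x := f (k - 2) with hxdef
  set y := f (k - 1) with hydef
  have hxy : x ≠ y := by
    intro h
    have := hinj (k - 2) (by omega) (k - 1) (by omega) h
    omega
  have he : ({f (k-3), x, y} : Finset ℕ) ∈ E' := by
    have h1 : (k - 3) + 2 < k := by omega
    have h2 := hedge (k - 3) h1
    have e1 : k - 3 + 1 = k - 2 := by omega
    have e2 : k - 3 + 2 = k - 1 := by omega
    rwa [e1, e2] at h2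
  set p : Finset ℕ := {x, y} with hpdef
  have hpcard : p.card = 2 := by
    rw [hpdef, Finset.card_insert_of_notMem (by simp [hxy]), Finset.card_singleton]
  have hpe : p ∈ Finset.powersetCard 2 ({f (k-3), x, y} : Finset ℕ) := by
    rw [Finset.mem_powersetCard]
    exact ⟨by rw [hpdef]; exact Finset.subset_insert _ _, hpcard⟩
  set F := E'.filter (fun g => p ⊆ g) with hFdef
  have hFt : t ≤ F.card := hco _ he p hpe
  have hgcard : ∀ g ∈ F, g.card = 3 := by
    intro g hg
    obtain ⟨a, ha, b, hb, c, hc, rfl⟩ := hcross g (Finset.mem_filter.mp hg).1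
    have hab : a ≠ b := fun h => Finset.disjoint_left.mp hAB ha (h ▸ hb)
    have hac : a ≠ c := fun h => Finset.disjoint_left.mp hAC ha (h ▸ hc)
    have hbc : b ≠ c := fun h => Finset.disjoint_left.mp hBC hb (h ▸ hc)
    rw [Finset.card_insert_of_notMem (by simp [hab, hac]),
      Finset.card_insert_of_notMem (by simp [hbc]), Finset.card_singleton]
  have hsing : ∀ g ∈ F, (g \ p).card = 1 := by
    intro g hg
    have hpg : p ⊆ g := (Finset.mem_filter.mp hg).2
    rw [Finset.card_sdiff_of_subset hpg, hgcard g hg, hpcard]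
  set T := F.biUnion (fun g => g \ p) with hTdef
  have hTcard : t ≤ T.card := by
    rw [hTdef, Finset.card_biUnion]
    · calc t ≤ F.card := hFt
        _ = ∑ g ∈ F, 1 := by simp
        _ ≤ ∑ g ∈ F, (g \ p).card := by
            apply Finset.sum_le_sum; intro g hg; rw [hsing g hg]
    · intro g hg g' hg' hne
      have h1 := hsing g hg
      have h2 := hsing g' hg'
      rw [Finset.card_eq_one] at h1 h2
      obtain ⟨u, hu⟩ := h1; obtain ⟨v, hv⟩ := h2
      rw [Function.onFun, hu, hv]
      rcases eq_or_ne u v with rfl | huv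
      · exfalso
        apply hne
        have hpg : p ⊆ g := (Finset.mem_filter.mp hg).2
        have hpg' : p ⊆ g' := (Finset.mem_filter.mp hg').2
        rw [← Finset.union_sdiff_of_subset hpg, ← Finset.union_sdiff_of_subset hpg', hu, hv]
      · exact Finset.disjoint_singleton.mpr huv
  have hxcls : x ∈ cls3 A B C (k - 2) := hmem _ (by omega)
  have hycls : y ∈ cls3 A B C (k - 1) := hmem _ (by omega)
  have hTcls : ∀ w ∈ T, w ∈ cls3 A B C k := by
    intro w hw
    rw [hTdef, Finset.mem_biUnion] at hw
    obtain ⟨g, hg, hwg⟩ := hw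
    obtain ⟨a, ha, b, hb, c, hc, hgeq⟩ := hcross g (Finset.mem_filter.mp hg).1
    have hpg : p ⊆ g := (Finset.mem_filter.mp hg).2
    have hxg : x ∈ g := hpg (by simp [hpdef])
    have hyg : y ∈ g := hpg (by simp [hpdef])
    rw [Finset.mem_sdiff] at hwg
    have hwginner : w ∈ g := hwg.1
    have hwp := hwg.2
    rw [hpdef] at hwp
    simp only [Finset.mem_insert, Finset.mem_singleton] at hwp
    push_neg at hwp
    rw [hgeq] at hxg hyg hwginner
    simp only [Finset.mem_insert, Finset.mem_singleton] at hxg hyg hwginner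
    have hm : k % 3 = 0 ∨ k % 3 = 1 ∨ k % 3 = 2 := by omega
    rcases hm with hm | hm | hm
    · rw [cls3_eq1 (by omega : (k-2) % 3 = 1)] at hxcls
      rw [cls3_eq2 (by omega : (k-1) % 3 = 2)] at hycls
      rw [cls3_eq0 hm]
      exact third_class hAB hAC hBC ha hb hc hxcls hycls hxg hyg hwginner hwp.1 hwp.2
    · rw [cls3_eq2 (by omega : (k-2) % 3 = 2)] at hxcls
      rw [cls3_eq0 (by omega : (k-1) % 3 = 0)] at hycls
      rw [cls3_eq1 hm]
      exact third_class hBC (hAB.symm) (hAC.symm) hb hc ha hxcls hycls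
        (by tauto) (by tauto) (by tauto) hwp.1 hwp.2
    · rw [cls3_eq0 (by omega : (k-2) % 3 = 0)] at hxcls
      rw [cls3_eq1 (by omega : (k-1) % 3 = 1)] at hycls
      rw [cls3_eq2 hm]
      exact third_class (hAC.symm) (hBC.symm) hAB hc ha hb hxcls hycls
        (by tauto) (by tauto) (by tauto) hwp.1 hwp.2
  -- path vertices in the forward class
  set PC := ((Finset.range k).filter (fun i => i % 3 = k % 3)).image f with hPCdef
  have hPCcard : PC.card ≤ k / 3 := by
    calc PC.card ≤ ((Finset.range k).filter (fun i => i % 3 = k % 3)).card :=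
          Finset.card_image_le
      _ ≤ (Finset.range (k / 3)).card := by
          apply Finset.card_le_card_of_injOn (fun i => i / 3)
          · intro i hi
            simp only [Finset.mem_coe, Finset.mem_filter, Finset.mem_range] at hi ⊢
            omega
          · intro i hi j hj hij
            simp only [Finset.coe_filter, Set.mem_setOf_eq, Finset.mem_range] at hi hj
            have hij' : i / 3 = j / 3 := hij
            omega
      _ = k / 3 := by simp
  have hex : ∃ w ∈ T, w ∉ PC := by
    by_contra hcon
    push_neg at hcon
    have : T ⊆ PC := hcon
    have := Finset.card_le_card this
    omega
  obtain ⟨w, hwT, hwPC⟩ := hex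
  have hwcls : w ∈ cls3 A B C k := hTcls w hwT
  have hwfresh : ∀ i < k, w ≠ f i := by
    intro i hi heq
    rcases eq_or_ne (i % 3) (k % 3) with hmod | hmod
    · exact hwPC (Finset.mem_image.mpr ⟨i, by simp [Finset.mem_filter, hi, hmod], heq.symm⟩)
    · have hdis := cls3_disjoint hAB hAC hBC (i := i) (j := k) hmod
      exact Finset.disjoint_left.mp hdis (heq ▸ hmem i hi) hwcls
  -- the new edge
  have hwg : ∃ g ∈ F, ({x, y, w} : Finset ℕ) = g := by
    rw [hTdef, Finset.mem_biUnion] at hwT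
    obtain ⟨g, hg, hwg⟩ := hwT
    refine ⟨g, hg, ?_⟩
    have hpg : p ⊆ g := (Finset.mem_filter.mp hg).2
    have h1 := hsing g hg
    rw [Finset.card_eq_one] at h1
    obtain ⟨u, hu⟩ := h1
    have : w = u := by rw [hu] at hwg; simpa using hwg
    subst this
    rw [← Finset.union_sdiff_of_subset hpg, hu, hpdef]
    ext z; simp [or_assoc]
  refine ⟨fun j => if j = k then w else f j, ⟨?_, ?_, ?_⟩, fun i hi => if_neg (by omega)⟩
  · intro i hi
    dsimp only
    by_cases hik : i = k
    · rw [if_pos hik, hik]; exact hwcls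
    · rw [if_neg hik]; exact hmem i (by omega)
  · intro i hi j hj heq
    dsimp only at heq
    by_cases hik : i = k <;> by_cases hjk : j = k
    · rw [hik, hjk]
    · rw [if_pos hik, if_neg hjk] at heq
      exact absurd heq (hwfresh j (by omega))
    · rw [if_neg hik, if_pos hjk] at heq
      exact absurd heq.symm (hwfresh i (by omega))
    · rw [if_neg hik, if_neg hjk] at heq
      exact hinj i (by omega) j (by omega) heq
  · intro i hi
    dsimp only
    have e0 : i ≠ k := by omega
    have e1 : i + 1 ≠ k := by omega
    by_cases h2k : i + 2 = k
    · obtain ⟨g, hg, hgeq⟩ := hwg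
      rw [if_neg e0, if_neg e1, if_pos h2k]
      have ei1 : i + 1 = k - 1 := by omega
      have ei : i = k - 2 := by omega
      rw [ei1, ei, ← hxdef, ← hydef, hgeq]
      exact (Finset.mem_filter.mp hg).1
    · rw [if_neg e0, if_neg e1, if_neg h2k]
      exact hedge i (by omega)

end Ext

lemma goodPath_mono {A B C : Finset ℕ} {E' : Finset (Finset ℕ)} {k m : ℕ} {f : ℕ → ℕ}
    (h : GoodPath A B C E' k f) (hm : m ≤ k) : GoodPath A B C E' m f :=
  ⟨fun i hi => h.1 i (by omega), fun i hi j hj => h.2.1 i (by omega) j (by omega),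
    fun i hi => h.2.2 i (by omega)⟩

lemma pathExists {A B C : Finset ℕ} {E' : Finset (Finset ℕ)} {t : ℕ}
    (hAB : Disjoint A B) (hAC : Disjoint A C) (hBC : Disjoint B C)
    (hcross : ∀ e ∈ E', ∃ a ∈ A, ∃ b ∈ B, ∃ c ∈ C, e = {a, b, c})
    (hco : ∀ e ∈ E', ∀ p ∈ Finset.powersetCard 2 e,
      t ≤ (E'.filter fun g => p ⊆ g).card)
    (hne : E'.Nonempty) :
    ∃ s f, 1 ≤ s ∧ t ≤ s ∧ GoodPath A B C E' (3 * s) f := by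
  -- base path from an edge
  obtain ⟨e, he⟩ := hne
  obtain ⟨a, ha, b, hb, c, hc, rfl⟩ := hcross e he
  have hab : a ≠ b := fun h => Finset.disjoint_left.mp hAB ha (h ▸ hb)
  have hac : a ≠ c := fun h => Finset.disjoint_left.mp hAC ha (h ▸ hc)
  have hbc : b ≠ c := fun h => Finset.disjoint_left.mp hBC hb (h ▸ hc)
  have hbase : GoodPath A B C E' 3 (fun i => if i = 0 then a else if i = 1 then b else c) := by
    refine ⟨?_, ?_, ?_⟩
    · intro i hi
      interval_cases i <;> simp [cls3, ha, hb, hc]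
    · intro i hi j hj heq
      interval_cases i <;> interval_cases j <;> simp_all
    · intro i hi
      have : i = 0 := by omega
      subst this
      simpa using he
  -- iterate the extension
  have key : ∀ m : ℕ, ∃ k f, 3 ≤ k ∧ GoodPath A B C E' k f ∧ (3 * t ≤ k ∨ m ≤ k) := by
    intro m
    induction m with
    | zero => exact ⟨3, _, le_refl _, hbase, Or.inr (by omega)⟩
    | succ m ih =>
      obtain ⟨k, f, hk3, hgood, hdisj⟩ := ih
      by_cases hkt : 3 * t ≤ k
      · exact ⟨k, f, hk3, hgood, Or.inl hkt⟩
      · have hlt : k / 3 < t := by omega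
        obtain ⟨f', hgood', -⟩ := extend_path hAB hAC hBC hcross hco hk3 hgood hlt
        exact ⟨k + 1, f', by omega, hgood', by omega⟩
  obtain ⟨k, f, hk3, hgood, hdisj⟩ := key (3 * t)
  have hk : 3 ≤ k ∧ 3 * t ≤ k := by omega
  refine ⟨k / 3, f, by omega, by omega, goodPath_mono hgood (by omega)⟩


local notation "pairsOf" E₀ => Finset.biUnion E₀ (fun e => Finset.powersetCard 2 e)

theorem cleanLemma (t : ℕ) (E₀ : Finset (Finset ℕ)) :
    ∃ E' ⊆ E₀,
      E₀.card ≤ E'.card + (E₀.biUnion fun e => e.powersetCard 2).card * (t - 1) ∧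
      ∀ e ∈ E', ∀ p ∈ Finset.powersetCard 2 e, t ≤ (E'.filter fun f => p ⊆ f).card := by
  induction E₀ using Finset.strongInduction with
  | _ E₀ ih =>
    by_cases hgood : ∀ e ∈ E₀, ∀ p ∈ Finset.powersetCard 2 e, t ≤ (E₀.filter fun f => p ⊆ f).card
    · exact ⟨E₀, Finset.Subset.refl _, Nat.le_add_right _ _, hgood⟩
    · push_neg at hgood
      obtain ⟨e, he, p, hp, hlt⟩ := hgood
      have hpe : p ⊆ e := (Finset.mem_powersetCard.mp hp).1
      set E₁ := E₀.filter (fun f => ¬ p ⊆ f) with hE₁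
      have hsub : E₁ ⊆ E₀ := Finset.filter_subset _ _
      have hssub : E₁ ⊂ E₀ := by
        refine Finset.ssubset_iff_of_subset hsub |>.mpr ⟨e, he, ?_⟩
        simp [hE₁, hpe, he]
      obtain ⟨E', hE'sub, hcard, hco⟩ := ih E₁ hssub
      refine ⟨E', hE'sub.trans hsub, ?_, hco⟩
      -- card accounting
      have hsplit : E₀.card = E₁.card + (E₀.filter fun f => p ⊆ f).card := by
        rw [hE₁, add_comm]
        exact (Finset.card_filter_add_card_filter_not (p := fun f => p ⊆ f)).symm
      have hrem : (E₀.filter fun f => p ⊆ f).card ≤ t - 1 := by omega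
      -- pairs of E₁ ⊆ pairs of E₀ minus p
      have hpmem : p ∈ E₀.biUnion fun e => e.powersetCard 2 :=
        Finset.mem_biUnion.mpr ⟨e, he, hp⟩
      have hpnot : p ∉ E₁.biUnion fun e => e.powersetCard 2 := by
        rw [Finset.mem_biUnion]
        rintro ⟨f, hf, hpf⟩
        rw [hE₁, Finset.mem_filter] at hf
        exact hf.2 (Finset.mem_powersetCard.mp hpf).1
      have hpairs : (E₁.biUnion fun e => e.powersetCard 2).card + 1 ≤
          (E₀.biUnion fun e => e.powersetCard 2).card := by
        have : (E₁.biUnion fun e => e.powersetCard 2) ⊂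
            (E₀.biUnion fun e => e.powersetCard 2) := by
          refine Finset.ssubset_iff_of_subset (Finset.biUnion_subset_biUnion_of_subset_left _ hsub)
            |>.mpr ⟨p, hpmem, hpnot⟩
        exact Finset.card_lt_card this
      have ht1 : 1 ≤ t := by omega
      calc E₀.card = E₁.card + (E₀.filter fun f => p ⊆ f).card := hsplit
        _ ≤ E'.card + (E₁.biUnion fun e => e.powersetCard 2).card * (t-1) + (t-1) := by omega
        _ ≤ E'.card + (E₀.biUnion fun e => e.powersetCard 2).card * (t-1) := by nlinarith

lemma goodPath_mono_E {A B C : Finset ℕ} {E' E : Finset (Finset ℕ)} {k : ℕ} {f : ℕ → ℕ}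
    (h : GoodPath A B C E' k f) (hE : E' ⊆ E) : GoodPath A B C E k f :=
  ⟨h.1, h.2.1, fun i hi => hE (h.2.2 i hi)⟩

/-- count crossing edges: `tripleCount ≤ card of crossing edge set` -/
lemma tripleCount_le {E : Finset (Finset ℕ)} {A B C : Finset ℕ}
    (hAB : Disjoint A B) (hAC : Disjoint A C) (hBC : Disjoint B C) :
    tripleCount E A B C ≤
      (E.filter fun e => ∃ a ∈ A, ∃ b ∈ B, ∃ c ∈ C, e = {a, b, c}).card := by
  apply Finset.card_le_card_of_injOn (fun t => ({t.1, t.2.1, t.2.2} : Finset ℕ))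
  · rintro ⟨a, b, c⟩ ht
    simp only [Finset.mem_coe, Finset.mem_filter, Finset.mem_product] at ht ⊢
    obtain ⟨⟨ha, hb, hc⟩, hE⟩ := ht
    exact ⟨hE, a, ha, b, hb, c, hc, rfl⟩
  · rintro ⟨a, b, c⟩ ht ⟨a', b', c'⟩ ht' heq
    simp only [Finset.coe_filter, Set.mem_setOf_eq, Finset.mem_product] at ht ht'
    obtain ⟨⟨ha, hb, hc⟩, -⟩ := ht
    obtain ⟨⟨ha', hb', hc'⟩, -⟩ := ht'
    simp only at heq
    have mem : ∀ z, z ∈ ({a, b, c} : Finset ℕ) ↔ z ∈ ({a', b', c'} : Finset ℕ) := by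
      intro z; rw [heq]
    have na'B : a' ∉ B := Finset.disjoint_left.mp hAB ha'
    have na'C : a' ∉ C := Finset.disjoint_left.mp hAC ha'
    have nb'A : b' ∉ A := fun hh => Finset.disjoint_left.mp hAB hh hb'
    have nb'C : b' ∉ C := Finset.disjoint_left.mp hBC hb'
    have nc'A : c' ∉ A := fun hh => Finset.disjoint_left.mp hAC hh hc'
    have nc'B : c' ∉ B := fun hh => Finset.disjoint_left.mp hBC hh hc'
    have haa : a = a' := by
      have h3 := (mem a').mpr (by simp)
      simp only [Finset.mem_insert, Finset.mem_singleton] at h3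
      rcases h3 with h | h | h
      · exact h.symm
      · exact absurd (h ▸ hb : a' ∈ B) na'B
      · exact absurd (h ▸ hc : a' ∈ C) na'C
    have hbb : b = b' := by
      have h3 := (mem b').mpr (by simp)
      simp only [Finset.mem_insert, Finset.mem_singleton] at h3
      rcases h3 with h | h | h
      · exact absurd (h ▸ ha : b' ∈ A) nb'A
      · exact h.symm
      · exact absurd (h ▸ hc : b' ∈ C) nb'C
    have hcc : c = c' := by
      have h3 := (mem c').mpr (by simp)
      simp only [Finset.mem_insert, Finset.mem_singleton] at h3
      rcases h3 with h | h | h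
      · exact absurd (h ▸ ha : c' ∈ A) nc'A
      · exact absurd (h ▸ hb : c' ∈ B) nc'B
      · exact h.symm
    simp [haa, hbb, hcc]

lemma extractRound (ξ d δ : ℝ) (n : ℕ) (hξ : 0 < ξ) (hd : 0 < d)
    (hL2 : 2 ≤ (d * ξ ^ 3 - δ) * n)
    (U V W : Finset ℕ) (hU : U.card = n) (hV : V.card = n) (hW : W.card = n)
    (E : Finset (Finset ℕ)) (hqr : WeaklyQuasirandomWith E δ d U V W)
    (A B C : Finset ℕ) (hA : A ⊆ U) (hB : B ⊆ V) (hC : C ⊆ W)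
    (hAB : Disjoint A B) (hAC : Disjoint A C) (hBC : Disjoint B C)
    (m : ℕ) (hAm : A.card = m) (hBm : B.card = m) (hCm : C.card = m)
    (hmξ : ξ * n ≤ (m : ℝ)) :
    ∃ (s : ℕ) (f : ℕ → ℕ), 1 ≤ s ∧ (d * ξ ^ 3 - δ) * n / 2 ≤ 3 * (s : ℝ) ∧
      GoodPath A B C E (3 * s) f := by
  set lam := d * ξ ^ 3 - δ with hLdef
  have hn1 : 1 ≤ n := by
    by_contra h
    have : n = 0 := by omega
    rw [this] at hL2; norm_num at hL2
  have hLpos : 0 < lam := by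
    rcases le_or_gt lam 0 with h | h
    · nlinarith [(Nat.cast_pos (α := ℝ)).mpr hn1]
    · exact h
  have hnR : (0:ℝ) < n := by exact_mod_cast hn1
  -- lower bound on crossing edges
  have hquas := hqr A hA B hB C hC
  rw [hU, hV, hW, hAm, hBm, hCm] at hquas
  have hcount : lam * n ^ 3 ≤ (tripleCount E A B C : ℝ) := by
    rw [abs_le] at hquas
    have h1 : d * (ξ * n) ^ 3 ≤ d * m ^ 3 := by
      have h0 : (0:ℝ) ≤ ξ * n := by positivity
      have := pow_le_pow_left₀ h0 hmξ 3
      nlinarith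
    nlinarith [hquas.1]
  set E₀ := E.filter (fun e => ∃ a ∈ A, ∃ b ∈ B, ∃ c ∈ C, e = {a, b, c}) with hE₀def
  have hcount₀ : lam * n ^ 3 ≤ (E₀.card : ℝ) :=
    le_trans hcount (by exact_mod_cast tripleCount_le hAB hAC hBC)
  -- pair bound
  have hmn : m ≤ n := hAm ▸ hU ▸ Finset.card_le_card hA
  have hpairs : ((E₀.biUnion fun e => e.powersetCard 2).card : ℝ) ≤ 9 * n ^ 2 / 2 := by
    have hsub : (E₀.biUnion fun e => e.powersetCard 2) ⊆ (A ∪ B ∪ C).powersetCard 2 := by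
      intro p hp
      rw [Finset.mem_biUnion] at hp
      obtain ⟨e, he, hpe⟩ := hp
      rw [Finset.mem_powersetCard] at hpe ⊢
      refine ⟨hpe.1.trans ?_, hpe.2⟩
      rw [hE₀def, Finset.mem_filter] at he
      obtain ⟨-, a, ha, b, hb, c, hc, rfl⟩ := he
      intro z hz
      simp only [Finset.mem_insert, Finset.mem_singleton] at hz
      rcases hz with rfl | rfl | rfl <;> simp [Finset.mem_union, ha, hb, hc]
    have hcard := Finset.card_le_card hsub
    rw [Finset.card_powersetCard] at hcard
    have hU3 : (A ∪ B ∪ C).card ≤ 3 * m := by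
      calc (A ∪ B ∪ C).card ≤ A.card + B.card + C.card := by
            refine le_trans (Finset.card_union_le _ _) ?_
            have := Finset.card_union_le A B
            omega
        _ = 3 * m := by omega
    have hch : (A ∪ B ∪ C).card.choose 2 ≤ (3 * m) * (3 * m) / 2 := by
      calc (A ∪ B ∪ C).card.choose 2 ≤ (3*m).choose 2 := Nat.choose_le_choose 2 hU3
        _ = (3*m) * (3*m - 1) / 2 := Nat.choose_two_right _
        _ ≤ (3 * m) * (3 * m) / 2 := by
            apply Nat.div_le_div_right
            exact Nat.mul_le_mul_left _ (by omega)
    have : ((E₀.biUnion fun e => e.powersetCard 2).card : ℝ) ≤ ((3*m) * (3*m) / 2 : ℕ) := by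
      exact_mod_cast le_trans hcard hch
    calc ((E₀.biUnion fun e => e.powersetCard 2).card : ℝ)
        ≤ (((3*m) * (3*m) / 2 : ℕ) : ℝ) := this
      _ ≤ ((3*m) * (3*m) : ℕ) / 2 := Nat.cast_div_le
      _ ≤ 9 * (n:ℝ) ^ 2 / 2 := by
          have : (m:ℝ) ≤ n := by exact_mod_cast hmn
          push_cast
          nlinarith
  -- threshold
  set t := ⌈2 * lam * n / 9⌉₊ with htdef
  have htpos : 1 ≤ t := by
    rw [htdef]
    apply Nat.one_le_ceil_iff.mpr
    positivity
  have htlt : ((t - 1 : ℕ) : ℝ) < 2 * lam * n / 9 := by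
    have h1 : ((t - 1 : ℕ) : ℝ) = (t : ℝ) - 1 := by
      rw [Nat.cast_sub htpos]; norm_num
    rw [h1, htdef]
    have := Nat.ceil_lt_add_one (show (0:ℝ) ≤ 2 * lam * n / 9 by positivity)
    linarith
  -- cleaning
  obtain ⟨E', hE'sub, hE'card, hE'co⟩ := cleanLemma t E₀
  have hE'ne : E'.Nonempty := by
    rw [← Finset.card_pos]
    by_contra h
    push_neg at h
    have h0 : E'.card = 0 := by omega
    have : (E₀.card : ℝ) ≤ ((E₀.biUnion fun e => e.powersetCard 2).card : ℝ) * ((t-1 : ℕ) : ℝ) := by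
      exact_mod_cast by omega
    have hb : ((E₀.biUnion fun e => e.powersetCard 2).card : ℝ) * ((t-1:ℕ) : ℝ) <
        (9 * n^2 / 2) * (2 * lam * n / 9) := by
      rcases eq_or_lt_of_le (show (0:ℝ) ≤ ((t-1:ℕ):ℝ) by positivity) with h' | h'
      · rw [← h', mul_zero]; positivity
      · apply mul_lt_mul' hpairs htlt (le_of_lt h') (by positivity) |>.trans_le (le_refl _)
    have : (E₀.card : ℝ) < lam * n ^ 3 := by
      calc (E₀.card:ℝ) ≤ _ := this
        _ < (9 * n^2/2) * (2 * lam * n / 9) := hb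
        _ = lam * n ^ 3 := by ring
    linarith
  -- crossing for E'
  have hcross' : ∀ e ∈ E', ∃ a ∈ A, ∃ b ∈ B, ∃ c ∈ C, e = {a, b, c} := by
    intro e he
    have := hE'sub he
    rw [hE₀def, Finset.mem_filter] at this
    exact this.2
  obtain ⟨s, f, hs1, hst, hgood⟩ := pathExists hAB hAC hBC hcross' hE'co hE'ne
  refine ⟨s, f, hs1, ?_, goodPath_mono_E hgood (hE'sub.trans (Finset.filter_subset _ _))⟩
  have hts : (t : ℝ) ≤ s := by exact_mod_cast hst
  have htge : 2 * lam * n / 9 ≤ (t : ℝ) := Nat.le_ceil _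
  calc lam * n / 2 ≤ 3 * (2 * lam * n / 9) := by nlinarith
    _ ≤ 3 * (t:ℝ) := by linarith
    _ ≤ 3 * s := by linarith

lemma card_filter_mod3 (s r : ℕ) (hr : r < 3) :
    ((Finset.range (3 * s)).filter (fun j => j % 3 = r)).card = s := by
  have heq : (Finset.range (3 * s)).filter (fun j => j % 3 = r) =
      (Finset.range s).image (fun j => 3 * j + r) := by
    ext j
    simp only [Finset.mem_filter, Finset.mem_range, Finset.mem_image]
    constructor
    · rintro ⟨h1, h2⟩; exact ⟨j / 3, by omega, by omega⟩
    · rintro ⟨x, hx, rfl⟩; omega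
  rw [heq, Finset.card_image_of_injective _ (fun a b h => by omega), Finset.card_range]

lemma coverLoop (ξ d δ : ℝ) (n : ℕ) (hξ : 0 < ξ) (hd : 0 < d)
    (hL2 : 2 ≤ (d * ξ ^ 3 - δ) * n)
    (U V W : Finset ℕ) (hU : U.card = n) (hV : V.card = n) (hW : W.card = n)
    (E : Finset (Finset ℕ)) (hqr : WeaklyQuasirandomWith E δ d U V W) :
    ∀ m : ℕ, ∀ A B C : Finset ℕ, A ⊆ U → B ⊆ V → C ⊆ W →
      Disjoint A B → Disjoint A C → Disjoint B C →
      A.card = m → B.card = m → C.card = m →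
      ∃ (N : ℕ) (S : ℕ → ℕ) (F : ℕ → ℕ → ℕ),
        (∀ i < N, 1 ≤ S i) ∧
        (∀ i < N, (d * ξ ^ 3 - δ) * n / 2 ≤ 3 * (S i : ℝ)) ∧
        (∀ i < N, ∀ j < 3 * S i, F i j ∈ A ∪ B ∪ C) ∧
        (∀ i < N, ∀ j1 < 3 * S i, ∀ j2 < 3 * S i, F i j1 = F i j2 → j1 = j2) ∧
        (∀ i < N, ∀ j, j + 2 < 3 * S i → ({F i j, F i (j+1), F i (j+2)} : Finset ℕ) ∈ E) ∧
        (∀ i1, i1 < N → ∀ i2 < N, i1 ≠ i2 →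
          ∀ j1 < 3 * S i1, ∀ j2 < 3 * S i2, F i1 j1 ≠ F i2 j2) ∧
        (3 * (m : ℝ) - 3 * (ξ * n) ≤ ∑ i ∈ Finset.range N, (3 * S i : ℝ)) := by
  intro m
  induction m using Nat.strong_induction_on with
  | _ m ih =>
    intro A B C hA hB hC hAB hAC hBC hAm hBm hCm
    rcases lt_or_ge (m : ℝ) (ξ * n) with hlt | hge
    · refine ⟨0, fun _ => 0, fun _ _ => 0, ?_, ?_, ?_, ?_, ?_, ?_, ?_⟩ <;>
        simp <;> linarith
    · obtain ⟨s, f, hs1, hslen, ⟨hmemg, hinjg, hedgeg⟩⟩ :=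
        extractRound ξ d δ n hξ hd hL2 U V W hU hV hW E hqr A B C hA hB hC hAB hAC hBC
          m hAm hBm hCm hge
      -- the three parts of the new path
      have hpart : ∀ r < 3, (((Finset.range (3*s)).filter (fun j => j % 3 = r)).image f).card
          = s := by
        intro r hr
        rw [Finset.card_image_of_injOn, card_filter_mod3 s r hr]
        intro j1 hj1 j2 hj2 hf
        simp only [Finset.coe_filter, Set.mem_setOf_eq, Finset.mem_range] at hj1 hj2
        exact hinjg j1 hj1.1 j2 hj2.1 hf
      set PA := ((Finset.range (3*s)).filter (fun j => j % 3 = 0)).image f with hPA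
      set PB := ((Finset.range (3*s)).filter (fun j => j % 3 = 1)).image f with hPB
      set PC := ((Finset.range (3*s)).filter (fun j => j % 3 = 2)).image f with hPC
      have hPAsub : PA ⊆ A := by
        rw [hPA]
        intro z hz
        rw [Finset.mem_image] at hz
        obtain ⟨j, hj, rfl⟩ := hz
        simp only [Finset.mem_filter, Finset.mem_range] at hj
        have := hmemg j hj.1
        rwa [cls3_eq0 hj.2] at this
      have hPBsub : PB ⊆ B := by
        rw [hPB]
        intro z hz
        rw [Finset.mem_image] at hz
        obtain ⟨j, hj, rfl⟩ := hz
        simp only [Finset.mem_filter, Finset.mem_range] at hj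
        have := hmemg j hj.1
        rwa [cls3_eq1 hj.2] at this
      have hPCsub : PC ⊆ C := by
        rw [hPC]
        intro z hz
        rw [Finset.mem_image] at hz
        obtain ⟨j, hj, rfl⟩ := hz
        simp only [Finset.mem_filter, Finset.mem_range] at hj
        have := hmemg j hj.1
        rwa [cls3_eq2 hj.2] at this
      have hsm : s ≤ m := by
        rw [← hAm, ← hpart 0 (by omega)]
        exact Finset.card_le_card hPAsub
      have hcardA : (A \ PA).card = m - s := by
        rw [Finset.card_sdiff_of_subset hPAsub, hAm, hpart 0 (by omega)]
      have hcardB : (B \ PB).card = m - s := by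
        rw [Finset.card_sdiff_of_subset hPBsub, hBm, hpart 1 (by omega)]
      have hcardC : (C \ PC).card = m - s := by
        rw [Finset.card_sdiff_of_subset hPCsub, hCm, hpart 2 (by omega)]
      have hms : m - s < m := by omega
      obtain ⟨N, S, F, c1, c2, c3, c4, c5, c6, c7⟩ :=
        ih (m - s) hms (A \ PA) (B \ PB) (C \ PC)
          ((Finset.sdiff_subset).trans hA) ((Finset.sdiff_subset).trans hB)
          ((Finset.sdiff_subset).trans hC)
          (Finset.disjoint_of_subset_left Finset.sdiff_subset
            (Finset.disjoint_of_subset_right Finset.sdiff_subset hAB))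
          (Finset.disjoint_of_subset_left Finset.sdiff_subset
            (Finset.disjoint_of_subset_right Finset.sdiff_subset hAC))
          (Finset.disjoint_of_subset_left Finset.sdiff_subset
            (Finset.disjoint_of_subset_right Finset.sdiff_subset hBC))
          hcardA hcardB hcardC
      -- new path vertices are not in the shrunken sets
      have hfresh : ∀ j < 3 * s, f j ∉ (A \ PA) ∪ (B \ PB) ∪ (C \ PC) := by
        intro j hj hcon
        have hfj := hmemg j hj
        have hr : j % 3 = 0 ∨ j % 3 = 1 ∨ j % 3 = 2 := by omega
        simp only [Finset.mem_union, Finset.mem_sdiff] at hcon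
        rcases hr with hr | hr | hr
        · rw [cls3_eq0 hr] at hfj
          have hin : f j ∈ PA := by
            rw [hPA, Finset.mem_image]
            exact ⟨j, by simp [Finset.mem_filter, Finset.mem_range, hj, hr], rfl⟩
          rcases hcon with (⟨h,h2⟩|⟨h,_⟩)|⟨h,_⟩
          · exact h2 hin
          · exact Finset.disjoint_left.mp hAB hfj h
          · exact Finset.disjoint_left.mp hAC hfj h
        · rw [cls3_eq1 hr] at hfj
          have hin : f j ∈ PB := by
            rw [hPB, Finset.mem_image]
            exact ⟨j, by simp [Finset.mem_filter, Finset.mem_range, hj, hr], rfl⟩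
          rcases hcon with (⟨h,_⟩|⟨h,h2⟩)|⟨h,_⟩
          · exact Finset.disjoint_left.mp hAB h hfj
          · exact h2 hin
          · exact Finset.disjoint_left.mp hBC hfj h
        · rw [cls3_eq2 hr] at hfj
          have hin : f j ∈ PC := by
            rw [hPC, Finset.mem_image]
            exact ⟨j, by simp [Finset.mem_filter, Finset.mem_range, hj, hr], rfl⟩
          rcases hcon with (⟨h,_⟩|⟨h,_⟩)|⟨h,h2⟩
          · exact Finset.disjoint_left.mp hAC h hfj
          · exact Finset.disjoint_left.mp hBC h hfj
          · exact h2 hin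
      have hfmem : ∀ j < 3 * s, f j ∈ A ∪ B ∪ C := by
        intro j hj
        have hfj := hmemg j hj
        have hr : j % 3 = 0 ∨ j % 3 = 1 ∨ j % 3 = 2 := by omega
        simp only [Finset.mem_union]
        rcases hr with hr | hr | hr
        · rw [cls3_eq0 hr] at hfj; tauto
        · rw [cls3_eq1 hr] at hfj; tauto
        · rw [cls3_eq2 hr] at hfj; tauto
      refine ⟨N + 1, fun i => if i = 0 then s else S (i - 1),
        fun i => if i = 0 then f else F (i - 1), ?_, ?_, ?_, ?_, ?_, ?_, ?_⟩
      · intro i hi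
        by_cases h0 : i = 0
        · simp only [h0, if_pos rfl]; exact hs1
        · simp only [if_neg h0]; exact c1 (i-1) (by omega)
      · intro i hi
        by_cases h0 : i = 0
        · simp only [h0, if_pos rfl]; exact hslen
        · simp only [if_neg h0]; exact c2 (i-1) (by omega)
      · intro i hi j hj
        by_cases h0 : i = 0
        · simp only [h0, if_pos rfl] at hj ⊢
          exact hfmem j hj
        · simp only [if_neg h0] at hj ⊢
          have := c3 (i-1) (by omega) j hj
          simp only [Finset.mem_union, Finset.mem_sdiff] at this ⊢
          tauto
      · intro i hi j1 hj1 j2 hj2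
        by_cases h0 : i = 0
        · simp only [h0, if_pos rfl] at hj1 hj2 ⊢
          exact fun h => hinjg j1 hj1 j2 hj2 h
        · simp only [if_neg h0] at hj1 hj2 ⊢
          exact c4 (i-1) (by omega) j1 hj1 j2 hj2
      · intro i hi j hj
        by_cases h0 : i = 0
        · simp only [h0, if_pos rfl] at hj ⊢
          exact hedgeg j hj
        · simp only [if_neg h0] at hj ⊢
          exact c5 (i-1) (by omega) j hj
      · intro i1 hi1 i2 hi2 hne j1 hj1 j2 hj2
        by_cases h1 : i1 = 0 <;> by_cases h2 : i2 = 0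
        · exact absurd (h1.trans h2.symm) hne
        · simp only [h1, if_pos rfl] at hj1 ⊢
          simp only [if_neg h2] at hj2 ⊢
          intro heq
          simp only [if_true] at heq
          exact hfresh j1 hj1 (heq ▸ c3 (i2-1) (by omega) j2 hj2)
        · simp only [if_neg h1] at hj1 ⊢
          simp only [h2, if_pos rfl] at hj2 ⊢
          intro heq
          simp only [if_true] at heq
          exact hfresh j2 hj2 (heq.symm ▸ c3 (i1-1) (by omega) j1 hj1)
        · simp only [if_neg h1] at hj1 ⊢
          simp only [if_neg h2] at hj2 ⊢
          exact c6 (i1-1) (by omega) (i2-1) (by omega) (by omega) j1 hj1 j2 hj2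
      · rw [Finset.sum_range_succ']
        simp only [Nat.add_sub_cancel, if_neg (Nat.succ_ne_zero _), if_pos rfl]
        have hmsR : ((m - s : ℕ) : ℝ) = (m : ℝ) - s := by
          rw [Nat.cast_sub hsm]
        have := c7
        rw [hmsR] at this
        push_cast
        push_cast at this
        linarith

/-- **Good Triplets.** If `(U, V, W)` is a weakly `(δ, d)`-quasirandom triple of
disjoint `n`-sets in a 3-graph `H` with `(dξ³ − δ)n/2 ≥ 1`, then at least `(1−ξ)·3n`
vertices of `H` can be covered by pairwise vertex-disjoint tight paths, each of
length at least `(dξ³ − δ)n/2 − 2`.  (Since the paths are vertex-disjoint, the number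
of covered vertices is `∑ i, (ℓ i + 2)`.) -/
theorem stmt_8 (ξ d δ : ℝ) (hξ : 0 < ξ) (hd : 0 < d) (hδ : 0 < δ) (n : ℕ)
    (hn : 1 ≤ (d * ξ ^ 3 - δ) * n / 2)
    (U V W : Finset ℕ) (hUV : Disjoint U V) (hUW : Disjoint U W) (hVW : Disjoint V W)
    (hU : U.card = n) (hV : V.card = n) (hW : W.card = n)
    (E : Finset (Finset ℕ)) (hE : ∀ e ∈ E, e.card = 3 ∧ e ⊆ U ∪ V ∪ W)
    (hqr : WeaklyQuasirandomWith E δ d U V W) :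
    ∃ (N : ℕ) (ℓ : Fin N → ℕ) (P : (i : Fin N) → Fin (ℓ i + 2) → ℕ),
      (∀ i, IsTightPathIn (U ∪ V ∪ W) E (ℓ i) (P i)) ∧
      (∀ i j, i ≠ j → ∀ a b, P i a ≠ P j b) ∧
      (∀ i, (d * ξ ^ 3 - δ) * n / 2 - 2 ≤ (ℓ i : ℝ)) ∧
      (1 - ξ) * (3 * n) ≤ ∑ i, ((ℓ i : ℝ) + 2) := by
  have hL2 : 2 ≤ (d * ξ ^ 3 - δ) * n := by linarith
  obtain ⟨N, S, F, c1, c2, c3, c4, c5, c6, c7⟩ :=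
    coverLoop ξ d δ n hξ hd hL2 U V W hU hV hW E hqr n U V W
      (Finset.Subset.refl _) (Finset.Subset.refl _) (Finset.Subset.refl _)
      hUV hUW hVW hU hV hW
  have hS2 : ∀ i < N, 2 ≤ 3 * S i := fun i hi => by have := c1 i hi; omega
  refine ⟨N, fun i => 3 * S i.val - 2, fun i j => F i.val j.val, ?_, ?_, ?_, ?_⟩
  · intro i
    have h2 := hS2 i.val i.isLt
    refine ⟨?_, ?_, ?_⟩
    · intro a b h
      apply Fin.ext
      exact c4 i.val i.isLt a.val (by have := a.isLt; dsimp only at this; omega) b.val (by have := b.isLt; dsimp only at this; omega) h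
    · intro j
      exact c3 i.val i.isLt j.val (by have := j.isLt; dsimp only at this; omega)
    · intro j hj
      dsimp only at hj
      exact c5 i.val i.isLt j (by omega)
  · intro i j hne a b
    have h2i := hS2 i.val i.isLt
    have h2j := hS2 j.val j.isLt
    exact c6 i.val i.isLt j.val j.isLt (fun h => hne (Fin.ext h))
      a.val (by have := a.isLt; dsimp only at this; omega) b.val (by have := b.isLt; dsimp only at this; omega)
  · intro i
    have h2 := hS2 i.val i.isLt
    have hc : ((3 * S i.val - 2 : ℕ) : ℝ) = 3 * (S i.val : ℝ) - 2 := by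
      rw [Nat.cast_sub (by omega)]
      push_cast
      ring
    rw [hc]
    have := c2 i.val i.isLt
    linarith
  · have hsum : ∑ i : Fin N, (((3 * S i.val - 2 : ℕ) : ℝ) + 2) =
        ∑ i ∈ Finset.range N, (3 * (S i : ℝ)) := by
      rw [Fin.sum_univ_eq_sum_range (fun i => ((3 * S i - 2 : ℕ) : ℝ) + 2) N]
      apply Finset.sum_congr rfl
      intro i hi
      rw [Finset.mem_range] at hi
      have h2 := hS2 i hi
      rw [Nat.cast_sub (by omega)]
      push_cast
      ring
    rw [hsum]
    have : 3 * (n : ℝ) - 3 * (ξ * n) ≤ ∑ i ∈ Finset.range N, (3 * (S i : ℝ)) := by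
      have := c7
      push_cast at this ⊢
      linarith
    linarith [this]
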